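/- arXiv:math/0501454 — 3 statements merged into one kernel-verified Lean document; each statement's English description precedes it below -/
import Mathlib

section
/- Let n ≥ 1 and let P, Q ∈ ℂ[x,y] be homogeneous of degrees 4n and 6n respectively, with 4P³ + 27Q² not identically zero. Then the rational function j = 1728·4P³/(4P³ + 27Q²) on P¹ is constant if and only if P_x·Q_y − P_y·Q_x = 0 identically. -/
open MvPolynomial

noncomputable abbrev phi2 : MvPolynomial (Fin 2) ℂ →ₐ[ℂ] Polynomial ℂ :=
  MvPolynomial.aeval ![Polynomial.X, 1]

lemma phi2_pderiv (f : MvPolynomial (Fin 2) ℂ) :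
    Polynomial.derivative (phi2 f) = phi2 (pderiv 0 f) := by
  induction f using MvPolynomial.induction_on with
  | C a => simp
  | add p q hp hq => simp [hp, hq]
  | mul_X p i hp =>
    fin_cases i <;>
      simp [Polynomial.derivative_mul, hp, pderiv_mul, mul_comm, add_comm]

lemma X_mul_pderiv_monomial (i : Fin 2) (m : Fin 2 →₀ ℕ) (c : ℂ) :
    X i * pderiv i (monomial m c) = MvPolynomial.C ((m i : ℂ)) * monomial m c := by
  rw [pderiv_monomial, MvPolynomial.C_mul_monomial]
  rcases Nat.eq_zero_or_pos (m i) with h | h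
  · simp [h]
  · have hm : m - Finsupp.single i 1 + Finsupp.single i 1 = m := by
      ext j
      rcases eq_or_ne j i with rfl | hj
      · simp [Finsupp.single_apply]; omega
      · simp [Finsupp.single_apply, hj.symm, Finsupp.single_apply_eq_zero]
    calc X i * monomial (m - Finsupp.single i 1) (c * (m i)) =
        monomial (m - Finsupp.single i 1 + Finsupp.single i 1) (c * m i) := by
          rw [X, monomial_mul, one_mul, add_comm]
    _ = monomial m ((m i : ℂ) * c) := by rw [hm, mul_comm]



lemma degree_two (m : Fin 2 →₀ ℕ) : m.degree = m 0 + m 1 := by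
  rw [Finsupp.degree]
  rw [show m 0 + m 1 = ∑ i : Fin 2, m i from (Fin.sum_univ_two m).symm]
  exact Finset.sum_subset (Finset.subset_univ _)
    (fun i _ hi => Finsupp.notMem_support_iff.mp hi)

lemma euler2 {d : ℕ} {F : MvPolynomial (Fin 2) ℂ} (hF : F.IsHomogeneous d) :
    X 0 * pderiv 0 F + X 1 * pderiv 1 F = MvPolynomial.C (d : ℂ) * F := by
  conv_lhs => rw [F.as_sum]
  conv_rhs => rw [F.as_sum]
  rw [map_sum (pderiv 0), map_sum (pderiv 1), Finset.mul_sum, Finset.mul_sum, Finset.mul_sum,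
    ← Finset.sum_add_distrib]
  refine Finset.sum_congr rfl fun m hm => ?_
  rw [X_mul_pderiv_monomial, X_mul_pderiv_monomial, ← add_mul, ← map_add, ← Nat.cast_add]
  have : m 0 + m 1 = d := by
    rw [← degree_two, Finsupp.degree_eq_weight_one]
    exact hF (mem_support_iff.mp hm)
  rw [this]

lemma phi2_monomial (u : Fin 2 →₀ ℕ) (c : ℂ) :
    phi2 (monomial u c) = Polynomial.C c * Polynomial.X ^ (u 0) := by
  rw [aeval_monomial]
  rw [Finsupp.prod_fintype _ _ (fun i => pow_zero _), Fin.prod_univ_two]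
  simp [Algebra.algebraMap_self_apply]

lemma support_degree {d : ℕ} {F : MvPolynomial (Fin 2) ℂ} (hF : F.IsHomogeneous d)
    {m : Fin 2 →₀ ℕ} (hm : m ∈ F.support) : m 0 + m 1 = d := by
  rw [← degree_two, Finsupp.degree_eq_weight_one]
  exact hF (mem_support_iff.mp hm)

lemma phi2_inj_homog {d : ℕ} {F : MvPolynomial (Fin 2) ℂ} (hF : F.IsHomogeneous d)
    (h : phi2 F = 0) : F = 0 := by
  by_contra hne
  obtain ⟨m, hm⟩ := (support_nonempty.mpr hne)
  have key : (phi2 F).coeff (m 0) = coeff m F := by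
    conv_lhs => rw [F.as_sum, map_sum]
    rw [Polynomial.finset_sum_coeff]
    rw [Finset.sum_eq_single m]
    · rw [phi2_monomial, Polynomial.coeff_C_mul, Polynomial.coeff_X_pow, if_pos rfl, mul_one]
    · intro u hu hum
      rw [phi2_monomial, Polynomial.coeff_C_mul, Polynomial.coeff_X_pow]
      have : ¬ (u 0 = m 0) := by
        intro h0
        apply hum
        have hu2 := support_degree hF hu
        have hm2 := support_degree hF hm
        ext j
        have h1 : u 1 = m 1 := by omega
        match j with
        | 0 => exact h0
        | 1 => exact h1
      rw [if_neg (fun hh => this hh.symm), mul_zero]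
    · intro hmm; exact absurd hm hmm
  rw [h, Polynomial.coeff_zero] at key
  exact (mem_support_iff.mp hm) key.symm

lemma ratio_const {f g : Polynomial ℂ} (hg : g ≠ 0)
    (h : Polynomial.derivative f * g = f * Polynomial.derivative g) :
    ∃ c : ℂ, f = Polynomial.C c * g := by
  set d := GCDMonoid.gcd f g with hd_def
  have hd : d ≠ 0 := gcd_ne_zero_of_right hg
  set f₁ := f / d with hf1_def
  set g₁ := g / d with hg1_def
  have hf : d * f₁ = f := EuclideanDomain.mul_div_cancel' hd (gcd_dvd_left f g)
  have hgg : d * g₁ = g := EuclideanDomain.mul_div_cancel' hd (gcd_dvd_right f g)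
  have hc : IsCoprime f₁ g₁ := isCoprime_div_gcd_div_gcd hg
  rw [← hf, ← hgg, Polynomial.derivative_mul, Polynomial.derivative_mul] at h
  have w : d * d * (Polynomial.derivative f₁ * g₁ - f₁ * Polynomial.derivative g₁)
      = d * d * 0 := by linear_combination h
  have w2 := mul_left_cancel₀ (mul_ne_zero hd hd) w
  have hw : Polynomial.wronskian f₁ g₁ = 0 := by
    unfold Polynomial.wronskian; linear_combination -w2
  obtain ⟨hf₁, hg₁⟩ := hc.wronskian_eq_zero_iff.mp hw
  obtain ⟨a, ha⟩ : ∃ a, f₁ = Polynomial.C a :=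
    ⟨_, Polynomial.eq_C_of_derivative_eq_zero hf₁⟩
  obtain ⟨b, hb⟩ : ∃ b, g₁ = Polynomial.C b :=
    ⟨_, Polynomial.eq_C_of_derivative_eq_zero hg₁⟩
  have hbne : b ≠ 0 := by
    rintro rfl
    rw [map_zero] at hb
    rw [hb, mul_zero] at hgg
    exact hg hgg.symm
  refine ⟨a / b, ?_⟩
  rw [← hf, ← hgg, ha, hb]
  rw [← mul_assoc, mul_comm (Polynomial.C (a/b)) d, mul_assoc, ← map_mul]
  congr 1
  rw [div_mul_cancel₀ _ hbne]
/-- **Constancy of the `j`-invariant (Lemma `derlem`).**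
Let `P, Q ∈ ℂ[x,y]` be homogeneous of degrees `4n` and `6n` with `4P³ + 27Q² ≠ 0`.
The rational function `j = 1728·4P³/(4P³ + 27Q²)` on `ℙ¹` is constant (i.e. there is
`c : ℂ` with `1728·4P³ = c·(4P³ + 27Q²)` as polynomials) if and only if
`P_x·Q_y − P_y·Q_x = 0` identically. -/
theorem stmt5 (n : ℕ) (hn : 1 ≤ n) (P Q : MvPolynomial (Fin 2) ℂ)
    (hP : P.IsHomogeneous (4 * n)) (hQ : Q.IsHomogeneous (6 * n))
    (hΔ : C 4 * P ^ 3 + C 27 * Q ^ 2 ≠ 0) :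
    (∃ c : ℂ, C 1728 * (C 4 * P ^ 3) = C c * (C 4 * P ^ 3 + C 27 * Q ^ 2)) ↔
      pderiv 0 P * pderiv 1 Q - pderiv 1 P * pderiv 0 Q = 0 := by
  constructor
  · rintro ⟨c, h⟩
    by_cases hc : c = 1728
    · subst hc
      have h2 : MvPolynomial.C (1728 : ℂ) * (MvPolynomial.C 27 * Q ^ 2) = 0 := by
        linear_combination -h
      have hQ0 : Q = 0 := by
        have := mul_eq_zero.mp h2
        rcases this with h' | h'
        · exact absurd h' (by simp)
        · rcases mul_eq_zero.mp h' with h'' | h''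
          · exact absurd h'' (by simp)
          · exact (pow_eq_zero_iff two_ne_zero).mp h''
      simp [hQ0]
    · have d0 := congrArg (pderiv 0) h
      have d1 := congrArg (pderiv 1) h
      simp only [pderiv_C_mul, map_add, pderiv_pow] at d0 d1
      have key : (MvPolynomial.C 1728 - MvPolynomial.C c) * MvPolynomial.C 4 * 3 *
          (P ^ 2 * (pderiv 0 P * pderiv 1 Q - pderiv 1 P * pderiv 0 Q)) = 0 := by
        linear_combination (pderiv 1 Q) * d0 - (pderiv 0 Q) * d1
      have hA : (MvPolynomial.C (1728 : ℂ) - MvPolynomial.C c : MvPolynomial (Fin 2) ℂ) ≠ 0 := by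
        rw [← map_sub, Ne, MvPolynomial.C_eq_zero, sub_eq_zero]
        exact fun h' => hc h'.symm
      have h4 : (MvPolynomial.C (4 : ℂ) : MvPolynomial (Fin 2) ℂ) ≠ 0 := by simp
      have h3 : (3 : MvPolynomial (Fin 2) ℂ) ≠ 0 := by
        norm_num
      have hP2J : P ^ 2 * (pderiv 0 P * pderiv 1 Q - pderiv 1 P * pderiv 0 Q) = 0 := by
        have := mul_eq_zero.mp key
        rcases this with h' | h'
        · exact absurd h' (by exact mul_ne_zero (mul_ne_zero hA h4) h3)
        · exact h'
      rcases mul_eq_zero.mp hP2J with h' | h'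
      · have hP0 : P = 0 := (pow_eq_zero_iff two_ne_zero).mp h'
        simp [hP0]
      · exact h'
  · intro hJ
    by_cases hQ0 : Q = 0
    · refine ⟨1728, ?_⟩
      rw [hQ0]; ring
    · have eP := euler2 hP
      have eQ := euler2 hQ
      rw [show (((4*n : ℕ) : ℂ)) = 2*2*(n:ℂ) by push_cast; ring, map_mul, map_mul] at eP
      rw [show (((6*n : ℕ) : ℂ)) = 2*3*(n:ℂ) by push_cast; ring, map_mul, map_mul] at eQ
      have hn0 : ((n:ℂ)) ≠ 0 := Nat.cast_ne_zero.mpr (by omega)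
      have key : ((MvPolynomial.C 2 * MvPolynomial.C (n:ℂ) : MvPolynomial (Fin 2) ℂ)) *
          (MvPolynomial.C 3 * Q * pderiv 0 P - MvPolynomial.C 2 * P * pderiv 0 Q) =
          X 1 * (pderiv 0 P * pderiv 1 Q - pderiv 1 P * pderiv 0 Q) := by
        linear_combination (pderiv 0 Q) * eP - (pderiv 0 P) * eQ
      rw [hJ, mul_zero] at key
      have h0 : MvPolynomial.C (3:ℂ) * Q * pderiv 0 P
          - MvPolynomial.C 2 * P * pderiv 0 Q = 0 := by
        rcases mul_eq_zero.mp key with h' | h'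
        · exact absurd h' (mul_ne_zero (by simp) (by simpa using hn0))
        · exact h'
      simp only [map_ofNat] at h0
      have claim0 : pderiv 0 (P^3) * Q^2 = P^3 * pderiv 0 (Q^2) := by
        rw [pderiv_pow, pderiv_pow]
        linear_combination (P^2 * Q) * h0
      have hg : phi2 (Q^2) ≠ 0 := by
        intro hg0
        exact (pow_ne_zero 2 hQ0) (phi2_inj_homog (hQ.pow 2) hg0)
      have htrans : Polynomial.derivative (phi2 (P^3)) * phi2 (Q^2)
          = phi2 (P^3) * Polynomial.derivative (phi2 (Q^2)) := by
        rw [phi2_pderiv, phi2_pderiv, ← map_mul, ← map_mul, claim0]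
      obtain ⟨γ, hγ⟩ := ratio_const hg htrans
      have h1 : (P^3 - MvPolynomial.C γ * Q^2).IsHomogeneous (12*n) := by
        have a1 := hP.pow 3
        rw [show 4*n*3 = 12*n by ring] at a1
        have a2 := (isHomogeneous_C (Fin 2) γ).mul (hQ.pow 2)
        rw [show 0 + 6*n*2 = 12*n by ring] at a2
        exact a1.sub a2
      have hsub : P^3 - MvPolynomial.C γ * Q^2 = 0 := by
        apply phi2_inj_homog h1
        rw [map_sub, map_mul, hγ]
        simp
      have hPQ : P^3 = MvPolynomial.C γ * Q^2 := by linear_combination hsub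
      have h4γ : (4*γ + 27 : ℂ) ≠ 0 := by
        intro h0'
        apply hΔ
        rw [hPQ, show (MvPolynomial.C (4:ℂ)) * (MvPolynomial.C γ * Q^2)
            + MvPolynomial.C 27 * Q^2
            = MvPolynomial.C (4*γ+27) * Q^2 by rw [map_add, map_mul]; ring,
          h0', map_zero, zero_mul]
      refine ⟨1728 * 4 * γ / (4*γ + 27), ?_⟩
      rw [hPQ]
      have hval : (1728 * 4 * γ / (4*γ+27) : ℂ) * (4*γ+27) = 1728 * 4 * γ :=
        div_mul_cancel₀ _ h4γ
      have htc : (MvPolynomial.C (1728 * 4 * γ / (4*γ+27) : ℂ) : MvPolynomial (Fin 2) ℂ) *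
          (MvPolynomial.C 4 * MvPolynomial.C γ + MvPolynomial.C 27)
          = MvPolynomial.C 1728 * (MvPolynomial.C 4 * MvPolynomial.C γ) := by
        rw [← map_mul, ← map_mul, ← map_add, ← map_mul]
        congr 1
        rw [show (4*γ+27 : ℂ) = 4*γ+27 from rfl]
        field_simp
      linear_combination -(Q^2) * htc
end

section
/- Let B = ℂ[x,y] and let M be a torsion-free graded B-module generated by its degree-0 part, with M eventually of rank 7 (i.e., dim_ℂ M_k = c + 7k for k ≫ 0 and some constant c). Then the successive differences d_k = dim M_{k+1} − dim M_k form a decreasing function of k ≥ 0, and d_k ≥ 7 for all k ≥ 0; consequently dim M_k ≥ dim M_0 + 7k for all k ≥ 0. -/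
open MvPolynomial

namespace Stmt8Aux

lemma degree_fin2 (d : Fin 2 →₀ ℕ) : d.degree = d 0 + d 1 := by
  rw [Finsupp.degree_eq_sum, Fin.sum_univ_two]

lemma sub_single_add {d : Fin 2 →₀ ℕ} {i : Fin 2} (h : d i ≠ 0) :
    Finsupp.single i 1 + (d - Finsupp.single i 1) = d := by
  apply Finsupp.ext
  intro j
  rw [Finsupp.add_apply, Finsupp.tsub_apply, Finsupp.single_apply]
  by_cases hij : i = j
  · subst hij; rw [if_pos rfl]; omega
  · simp [hij]

lemma X_mul_monomial_sub (i : Fin 2) (d : Fin 2 →₀ ℕ) (h : d i ≠ 0) (a : ℂ) :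
    X i * monomial (d - Finsupp.single i 1) a = monomial d a := by
  rw [X, monomial_mul, one_mul, sub_single_add h]

lemma degree_sub_single {d : Fin 2 →₀ ℕ} {i : Fin 2} (h : d i ≠ 0) :
    (d - Finsupp.single i 1).degree + 1 = d.degree := by
  have := sub_single_add h
  have h2 : d.degree = (Finsupp.single i 1 + (d - Finsupp.single i 1)).degree := by rw [this]
  rw [h2, degree_fin2, degree_fin2, Finsupp.add_apply, Finsupp.add_apply,
    Finsupp.single_apply]
  fin_cases i <;> simp <;> omega

/-- Every homogeneous polynomial of degree `n+1` in two variables is `X 0 * p + X 1 * q`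
with `p`, `q` homogeneous of degree `n`. -/
lemma homog_decomp {n : ℕ} {b : MvPolynomial (Fin 2) ℂ} (hb : b.IsHomogeneous (n + 1)) :
    ∃ p q : MvPolynomial (Fin 2) ℂ, p.IsHomogeneous n ∧ q.IsHomogeneous n ∧
      b = X 0 * p + X 1 * q := by
  classical
  have hdeg : ∀ d ∈ b.support, d.degree = n + 1 := by
    intro d hd
    have := hb (mem_support_iff.mp hd)
    rw [Finsupp.degree_eq_weight_one]; exact this
  refine ⟨∑ d ∈ b.support.filter (fun d => d 0 ≠ 0),
      monomial (d - Finsupp.single 0 1) (coeff d b),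
    ∑ d ∈ b.support.filter (fun d => ¬ d 0 ≠ 0),
      monomial (d - Finsupp.single 1 1) (coeff d b), ?_, ?_, ?_⟩
  · apply IsHomogeneous.sum
    intro d hd
    rw [Finset.mem_filter] at hd
    apply isHomogeneous_monomial
    have h1 := degree_sub_single (i := 0) hd.2
    have h2 := hdeg d hd.1
    omega
  · apply IsHomogeneous.sum
    intro d hd
    rw [Finset.mem_filter, not_not] at hd
    have hd1 : d 1 ≠ 0 := by
      have h2 := hdeg d hd.1
      rw [degree_fin2] at h2
      omega
    apply isHomogeneous_monomial
    have h1 := degree_sub_single (i := 1) hd1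
    have h2 := hdeg d hd.1
    omega
  · conv_lhs => rw [← b.support_sum_monomial_coeff]
    rw [← Finset.sum_filter_add_sum_filter_not b.support (fun d => d 0 ≠ 0)]
    congr 1
    · rw [Finset.mul_sum]
      apply Finset.sum_congr rfl
      intro d hd
      rw [Finset.mem_filter] at hd
      rw [X_mul_monomial_sub 0 d hd.2]
    · rw [Finset.mul_sum]
      apply Finset.sum_congr rfl
      intro d hd
      rw [Finset.mem_filter, not_not] at hd
      have hd1 : d 1 ≠ 0 := by
        have h2 := hdeg d hd.1
        rw [degree_fin2] at h2
        omega
      rw [X_mul_monomial_sub 1 d hd1]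


variable {M : Type*} [AddCommGroup M] [Module ℂ M]
  [Module (MvPolynomial (Fin 2) ℂ) M] [IsScalarTower ℂ (MvPolynomial (Fin 2) ℂ) M]

/-- scalar multiplication by a fixed polynomial, as a `ℂ`-linear map. -/
noncomputable def lsmulP (b : MvPolynomial (Fin 2) ℂ) : M →ₗ[ℂ] M where
  toFun v := b • v
  map_add' := smul_add b
  map_smul' c v := smul_comm b c v

@[simp] lemma lsmulP_apply (b : MvPolynomial (Fin 2) ℂ) (v : M) : lsmulP b v = b • v := rfl

variable (ℳ : ℕ → Submodule ℂ M)

lemma proj_smul [DirectSum.Decomposition ℳ]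
    (hcompat : ∀ (i j : ℕ) (b : MvPolynomial (Fin 2) ℂ) (x : M),
      b ∈ homogeneousSubmodule (Fin 2) ℂ i → x ∈ ℳ j → b • x ∈ ℳ (i + j))
    (n : ℕ) (b : MvPolynomial (Fin 2) ℂ) {m : M} (hm : m ∈ ℳ 0) :
    (DirectSum.decompose ℳ (b • m) n : M) = homogeneousComponent n b • m := by
  classical
  have hmem : ∀ i : ℕ, (homogeneousComponent i b) • m ∈ ℳ i := by
    intro i
    have := hcompat i 0 (homogeneousComponent i b) m
      (homogeneousComponent_isHomogeneous i b) hm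
    simpa using this
  conv_lhs => rw [← b.sum_homogeneousComponent]
  rw [Finset.sum_smul, DirectSum.decompose_sum, DFinsupp.finset_sum_apply,
    AddSubmonoidClass.coe_finset_sum]
  by_cases hn : n ∈ Finset.range (b.totalDegree + 1)
  · rw [Finset.sum_eq_single_of_mem n hn]
    · exact DirectSum.decompose_of_mem_same ℳ (hmem n)
    · intro i _ hin
      exact DirectSum.decompose_of_mem_ne ℳ (hmem i) hin
  · rw [homogeneousComponent_eq_zero _ b (by simp only [Finset.mem_range] at hn; omega),
      zero_smul]
    apply Finset.sum_eq_zero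
    intro i hi
    exact DirectSum.decompose_of_mem_ne ℳ (hmem i) (fun h' => hn (h' ▸ hi))

lemma mem_smul_sup [DirectSum.Decomposition ℳ]
    (hcompat : ∀ (i j : ℕ) (b : MvPolynomial (Fin 2) ℂ) (x : M),
      b ∈ homogeneousSubmodule (Fin 2) ℂ i → x ∈ ℳ j → b • x ∈ ℳ (i + j))
    (hgen : Submodule.span (MvPolynomial (Fin 2) ℂ) (ℳ 0 : Set M) = ⊤)
    (n : ℕ) {v : M} (hv : v ∈ ℳ (n + 1)) :
    v ∈ Submodule.map (lsmulP (X 0)) (ℳ n) ⊔ Submodule.map (lsmulP (X 1)) (ℳ n) := by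
  classical
  have hv' : v ∈ Submodule.span (MvPolynomial (Fin 2) ℂ) (ℳ 0 : Set M) := by
    rw [hgen]; trivial
  obtain ⟨N, f, g, hfg⟩ := Submodule.mem_span_set'.mp hv'
  have hkey : v = ∑ i : Fin N, (homogeneousComponent (n + 1) (f i)) • (g i : M) := by
    have h1 : v = (DirectSum.decompose ℳ v (n + 1) : M) :=
      (DirectSum.decompose_of_mem_same ℳ hv).symm
    rw [h1, ← hfg, DirectSum.decompose_sum, DFinsupp.finset_sum_apply, AddSubmonoidClass.coe_finset_sum]
    apply Finset.sum_congr rfl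
    intro i _
    exact proj_smul ℳ hcompat (n + 1) (f i) (g i).2
  rw [hkey]
  apply Submodule.sum_mem
  intro i _
  obtain ⟨p, q, hp, hq, hpq⟩ := homog_decomp (homogeneousComponent_isHomogeneous (n + 1) (f i))
  rw [hpq, add_smul, mul_smul, mul_smul]
  apply Submodule.add_mem
  · exact Submodule.mem_sup_left
      ⟨p • (g i : M), by simpa using hcompat n 0 p _ hp (g i).2, rfl⟩
  · exact Submodule.mem_sup_right
      ⟨q • (g i : M), by simpa using hcompat n 0 q _ hq (g i).2, rfl⟩


variable (hcompat : ∀ (i j : ℕ) (b : MvPolynomial (Fin 2) ℂ) (x : M),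
      b ∈ homogeneousSubmodule (Fin 2) ℂ i → x ∈ ℳ j → b • x ∈ ℳ (i + j))

/-- Multiplication by `X i` as a map `ℳ k → ℳ (k+1)`. -/
noncomputable def fX (i : Fin 2) (k : ℕ) : ℳ k →ₗ[ℂ] ℳ (k + 1) :=
  LinearMap.codRestrict (ℳ (k + 1)) ((lsmulP (X i)).comp (ℳ k).subtype)
    (fun a => by
      have h := hcompat 1 k (X i) a (isHomogeneous_X ℂ i) a.2
      rw [Nat.add_comm] at h
      exact h)

@[simp] lemma fX_apply (i : Fin 2) (k : ℕ) (a : ℳ k) :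
    (fX ℳ hcompat i k a : M) = (X i : MvPolynomial (Fin 2) ℂ) • (a : M) := rfl

noncomputable def Phi (k : ℕ) : (ℳ k × ℳ k) →ₗ[ℂ] ℳ (k + 1) :=
  (fX ℳ hcompat 0 k).comp (LinearMap.fst ℂ _ _) + (fX ℳ hcompat 1 k).comp (LinearMap.snd ℂ _ _)

lemma Phi_apply (k : ℕ) (p : ℳ k × ℳ k) :
    (Phi ℳ hcompat k p : M)
      = (X 0 : MvPolynomial (Fin 2) ℂ) • (p.1 : M) + (X 1 : MvPolynomial (Fin 2) ℂ) • (p.2 : M) :=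
  rfl

noncomputable def Psi (k : ℕ) : ℳ k →ₗ[ℂ] (ℳ (k + 1) × ℳ (k + 1)) :=
  LinearMap.prod (fX ℳ hcompat 1 k) (-(fX ℳ hcompat 0 k))

lemma Phi_surjective [DirectSum.Decomposition ℳ]
    (hgen : Submodule.span (MvPolynomial (Fin 2) ℂ) (ℳ 0 : Set M) = ⊤) (k : ℕ) :
    Function.Surjective (Phi ℳ hcompat k) := by
  intro w
  obtain ⟨y, hy, z, hz, hyz⟩ := Submodule.mem_sup.mp (mem_smul_sup ℳ hcompat hgen k w.2)
  obtain ⟨a, ha, rfl⟩ := hy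
  obtain ⟨b, hb, rfl⟩ := hz
  exact ⟨(⟨a, ha⟩, ⟨b, hb⟩), Subtype.ext (by rw [Phi_apply ℳ hcompat]; exact hyz)⟩

lemma Psi_injective
    (htorsionfree : ∀ (b : MvPolynomial (Fin 2) ℂ) (x : M), b • x = 0 → b = 0 ∨ x = 0)
    (k : ℕ) : Function.Injective (Psi ℳ hcompat k) := by
  rw [← LinearMap.ker_eq_bot, LinearMap.ker_eq_bot']
  intro a ha
  have h1 : (X 1 : MvPolynomial (Fin 2) ℂ) • (a : M) = 0 := by
    have h0 : (Psi ℳ hcompat k a).1 = 0 := by rw [ha]; rfl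
    exact congrArg (fun x : ℳ (k + 1) => (x : M)) h0
  rcases htorsionfree _ _ h1 with h | h
  · exact absurd h (X_ne_zero 1)
  · exact Subtype.ext h

lemma Psi_range_le_ker (k : ℕ) :
    LinearMap.range (Psi ℳ hcompat k) ≤ LinearMap.ker (Phi ℳ hcompat (k + 1)) := by
  rintro w ⟨a, rfl⟩
  rw [LinearMap.mem_ker]
  apply Subtype.ext
  show (Phi ℳ hcompat (k + 1) (Psi ℳ hcompat k a) : M) = 0
  rw [Phi_apply ℳ hcompat]
  show (X 0 : MvPolynomial (Fin 2) ℂ) • (fX ℳ hcompat 1 k a : M) + (X 1 : MvPolynomial (Fin 2) ℂ) • (((-(fX ℳ hcompat 0 k)) a : ℳ (k+1)) : M) = 0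
  rw [LinearMap.neg_apply]
  show X 0 • ((X 1:MvPolynomial (Fin 2) ℂ) • (a:M)) + X 1 • (-((X 0:MvPolynomial (Fin 2) ℂ) • (a:M))) = 0
  rw [smul_neg, smul_smul, smul_smul, mul_comm (X 1) (X 0), add_neg_cancel]


include hcompat in
lemma concave [DirectSum.Decomposition ℳ]
    (htorsionfree : ∀ (b : MvPolynomial (Fin 2) ℂ) (x : M), b • x = 0 → b = 0 ∨ x = 0)
    (hgen : Submodule.span (MvPolynomial (Fin 2) ℂ) (ℳ 0 : Set M) = ⊤)
    (hfd : ∀ k, FiniteDimensional ℂ (ℳ k)) (k : ℕ) :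
    Module.finrank ℂ (ℳ (k + 2)) + Module.finrank ℂ (ℳ k)
      ≤ 2 * Module.finrank ℂ (ℳ (k + 1)) := by
  haveI := hfd k; haveI := hfd (k + 1); haveI := hfd (k + 2)
  have hrank := LinearMap.finrank_range_add_finrank_ker (Phi ℳ hcompat (k + 1))
  have h1 : Module.finrank ℂ (LinearMap.range (Phi ℳ hcompat (k + 1)))
      = Module.finrank ℂ (ℳ (k + 2)) := by
    rw [LinearMap.range_eq_top.mpr (Phi_surjective ℳ hcompat hgen (k + 1))]
    exact finrank_top ℂ _
  have h2 : Module.finrank ℂ (↥(ℳ (k + 1)) × ↥(ℳ (k + 1)))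
      = 2 * Module.finrank ℂ (ℳ (k + 1)) := by
    rw [Module.finrank_prod]; ring
  have h3 : Module.finrank ℂ (ℳ k)
      ≤ Module.finrank ℂ (LinearMap.ker (Phi ℳ hcompat (k + 1))) := by
    calc Module.finrank ℂ (ℳ k)
        = Module.finrank ℂ (LinearMap.range (Psi ℳ hcompat k)) :=
          (LinearMap.finrank_range_of_inj (Psi_injective ℳ hcompat htorsionfree k)).symm
      _ ≤ _ := Submodule.finrank_mono (Psi_range_le_ker ℳ hcompat k)
  omega

end Stmt8Aux

/-- **Hilbert-function monotonicity for torsion-free graded `ℂ[x,y]`-modules.**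
Let `B = ℂ[x,y]` (with its standard grading by the homogeneous pieces
`homogeneousSubmodule (Fin 2) ℂ i`) and let `M` be a torsion-free graded `B`-module
(grading `ℳ k`, an internal direct sum of `ℂ`-subspaces, compatible with the grading
of `B`), generated by its degree-`0` part, with `M` eventually of rank `7`, i.e.
`dim_ℂ (ℳ k) = c + 7k` for all `k ≥ K`.  Then the successive differences
`d k = dim ℳ (k+1) − dim ℳ k` are decreasing in `k ≥ 0` (stated subtraction-free as
`dim ℳ (k+2) + dim ℳ k ≤ 2 · dim ℳ (k+1)`), and `d k ≥ 7` for all `k ≥ 0`;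
consequently `dim ℳ k ≥ dim ℳ 0 + 7k` for all `k ≥ 0`. -/
theorem stmt8 (M : Type*) [AddCommGroup M] [Module ℂ M]
    [Module (MvPolynomial (Fin 2) ℂ) M] [IsScalarTower ℂ (MvPolynomial (Fin 2) ℂ) M]
    (ℳ : ℕ → Submodule ℂ M)
    (hdirect : DirectSum.IsInternal ℳ)
    (hcompat : ∀ (i j : ℕ) (b : MvPolynomial (Fin 2) ℂ) (x : M),
      b ∈ homogeneousSubmodule (Fin 2) ℂ i → x ∈ ℳ j → b • x ∈ ℳ (i + j))
    (htorsionfree : ∀ (b : MvPolynomial (Fin 2) ℂ) (x : M), b • x = 0 → b = 0 ∨ x = 0)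
    (hgen : Submodule.span (MvPolynomial (Fin 2) ℂ) (ℳ 0 : Set M) = ⊤)
    (hfd : ∀ k, FiniteDimensional ℂ (ℳ k))
    (c K : ℕ) (hK : ∀ k, K ≤ k → Module.finrank ℂ (ℳ k) = c + 7 * k) :
    (∀ k : ℕ, Module.finrank ℂ (ℳ (k + 2)) + Module.finrank ℂ (ℳ k)
        ≤ 2 * Module.finrank ℂ (ℳ (k + 1)))
    ∧ (∀ k : ℕ, Module.finrank ℂ (ℳ k) + 7 ≤ Module.finrank ℂ (ℳ (k + 1)))
    ∧ (∀ k : ℕ, Module.finrank ℂ (ℳ 0) + 7 * k ≤ Module.finrank ℂ (ℳ k)) := by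
    classical
  haveI : DirectSum.Decomposition ℳ := hdirect.chooseDecomposition
  have hconc : ∀ k : ℕ, Module.finrank ℂ (ℳ (k + 2)) + Module.finrank ℂ (ℳ k)
      ≤ 2 * Module.finrank ℂ (ℳ (k + 1)) :=
    fun k => Stmt8Aux.concave ℳ hcompat htorsionfree hgen hfd k
  have hfour : ∀ k n : ℕ, Module.finrank ℂ (ℳ k) + Module.finrank ℂ (ℳ (k + 1 + n))
      ≤ Module.finrank ℂ (ℳ (k + 1)) + Module.finrank ℂ (ℳ (k + n)) := by
    intro k n
    induction n with
    | zero => simp only [Nat.add_zero]; omega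
    | succ n ih =>
      have hc := hconc (k + n)
      have e1 : k + 1 + (n + 1) = k + n + 2 := by omega
      have e2 : k + (n + 1) = k + n + 1 := by omega
      have e3 : k + 1 + n = k + n + 1 := by omega
      rw [e1, e2]
      rw [e3] at ih
      omega
  have hstep : ∀ k : ℕ, Module.finrank ℂ (ℳ k) + 7 ≤ Module.finrank ℂ (ℳ (k + 1)) := by
    intro k
    have h4 := hfour k K
    have hK1 := hK (k + K) (by omega)
    have hK2 := hK (k + 1 + K) (by omega)
    omega
  refine ⟨hconc, hstep, ?_⟩
  intro k
  induction k with
  | zero => simp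
  | succ n ih =>
    have := hstep n
    omega
end

section
/- Let n ≥ 1 and let A = ℂ[x,y,z,w] be graded with weights (1,1,2n,3n). Let Ã be the ℂ[x,y]-submodule of A generated by A_{≤6n} (elements of degree at most 6n). Then Ã is a free ℂ[x,y]-module of rank 7, and dim_ℂ Ã_{6n+k} = dim_ℂ A_{6n} + 7k for all k ≥ 0. -/
open MvPolynomial

noncomputable section

/-- `B = ℂ[x,y]`. -/
abbrev B : Type := MvPolynomial (Fin 2) ℂ

/-- `A = ℂ[x,y,z,w]` (the weights `(1,1,2n,3n)` are recorded by `wt` below). -/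
abbrev A : Type := MvPolynomial (Fin 4) ℂ

/-- The inclusion `B = ℂ[x,y] ↪ A = ℂ[x,y,z,w]`. -/
def incl : B →+* A :=
  (rename (Fin.castLE (by norm_num : 2 ≤ 4))).toRingHom

/-- `A` as a `B`-algebra via the inclusion `ℂ[x,y] ↪ ℂ[x,y,z,w]`. -/
instance : Algebra B A := incl.toAlgebra

instance : IsScalarTower ℂ B A :=
  IsScalarTower.of_algebraMap_eq fun c => by
    simp [RingHom.algebraMap_toAlgebra, incl, MvPolynomial.algebraMap_eq, rename_C]

/-- The weights `wt(x) = wt(y) = 1`, `wt(z) = 2n`, `wt(w) = 3n` on `A`. -/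
def wt (n : ℕ) : Fin 4 → ℕ := ![1, 1, 2 * n, 3 * n]

/-! ### Auxiliary material -/

lemma weight_eq (n : ℕ) (σ : Fin 4 →₀ ℕ) :
    Finsupp.weight (wt n) σ = σ 0 + σ 1 + σ 2 * (2 * n) + σ 3 * (3 * n) := by
  rw [Finsupp.weight_apply, Finsupp.sum_fintype]
  · simp [Fin.sum_univ_four, wt, mul_comm]
  · intro; simp

def cc : Fin 7 → ℕ := ![0,1,2,3,0,1,0]
def dd : Fin 7 → ℕ := ![0,0,0,0,1,1,2]

lemma exists_idx {c d : ℕ} (h : 2 * c + 3 * d ≤ 6) : ∃ i : Fin 7, cc i = c ∧ dd i = d := by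
  have hd : d ≤ 2 := by omega
  interval_cases d
  · have hc : c ≤ 3 := by omega
    interval_cases c
    exacts [⟨0, rfl, rfl⟩, ⟨1, rfl, rfl⟩, ⟨2, rfl, rfl⟩, ⟨3, rfl, rfl⟩]
  · have hc : c ≤ 1 := by omega
    interval_cases c
    exacts [⟨4, rfl, rfl⟩, ⟨5, rfl, rfl⟩]
  · have hc : c = 0 := by omega
    subst hc; exact ⟨6, rfl, rfl⟩

lemma idx_inj : Function.Injective (fun i : Fin 7 => (cc i, dd i)) := by decide

lemma wle (i : Fin 7) : 2 * cc i + 3 * dd i ≤ 6 := by revert i; decide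

/-! ### The embedding of exponents -/

def emb (τ : Fin 2 →₀ ℕ) : Fin 4 →₀ ℕ := Finsupp.mapDomain (Fin.castLE (by norm_num : 2 ≤ 4)) τ

lemma castLE_inj : Function.Injective (Fin.castLE (by norm_num : (2:ℕ) ≤ 4)) :=
  Fin.castLE_injective _

lemma emb_0 (τ : Fin 2 →₀ ℕ) : emb τ 0 = τ 0 :=
  Finsupp.mapDomain_apply castLE_inj τ 0
lemma emb_1 (τ : Fin 2 →₀ ℕ) : emb τ 1 = τ 1 :=
  Finsupp.mapDomain_apply castLE_inj τ 1
lemma emb_2 (τ : Fin 2 →₀ ℕ) : emb τ 2 = 0 := by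
  apply Finsupp.mapDomain_notin_range
  rintro ⟨i, hi⟩
  have := i.2
  rw [Fin.ext_iff] at hi
  simp [Fin.castLE] at hi
  omega
lemma emb_3 (τ : Fin 2 →₀ ℕ) : emb τ 3 = 0 := by
  apply Finsupp.mapDomain_notin_range
  rintro ⟨i, hi⟩
  have := i.2
  rw [Fin.ext_iff] at hi
  simp [Fin.castLE] at hi
  omega

def μm (i : Fin 7) : Fin 4 →₀ ℕ := Finsupp.single 2 (cc i) + Finsupp.single 3 (dd i)
def vv (i : Fin 7) : A := monomial (μm i) 1
def νm (i : Fin 7) : Fin 2 →₀ ℕ := Finsupp.single 0 (cc i) + Finsupp.single 1 (dd i)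

lemma μm_0 (i : Fin 7) : μm i 0 = 0 := by simp [μm, Finsupp.single_apply]
lemma μm_1 (i : Fin 7) : μm i 1 = 0 := by simp [μm, Finsupp.single_apply]
lemma μm_2 (i : Fin 7) : μm i 2 = cc i := by simp [μm, Finsupp.single_apply]
lemma μm_3 (i : Fin 7) : μm i 3 = dd i := by simp [μm, Finsupp.single_apply]

lemma sigma_decomp (σ : Fin 4 →₀ ℕ) {i : Fin 7} (h2 : cc i = σ 2) (h3 : dd i = σ 3) :
    σ = emb (Finsupp.single 0 (σ 0) + Finsupp.single 1 (σ 1)) + μm i := by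
  ext j
  fin_cases j <;>
    simp [Finsupp.add_apply, emb_0, emb_1, emb_2, emb_3, μm_0, μm_1, μm_2, μm_3, h2, h3,
      Finsupp.single_apply]

lemma incl_monomial_mul (τ : Fin 2 →₀ ℕ) (c : ℂ) (ρ : Fin 4 →₀ ℕ) :
    incl (monomial τ c) * monomial ρ 1 = monomial (emb τ + ρ) c := by
  show rename _ (monomial τ c) * _ = _
  rw [rename_monomial, monomial_mul, mul_one]
  rfl

lemma smul_eq_incl_mul (p : B) (q : A) : p • q = incl p * q :=
  Algebra.smul_def p q

/-! ### The algebra equivalence `A ≃ MvPolynomial (Fin 2) B` -/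

def e24 : Fin 4 ≃ Fin 2 ⊕ Fin 2 := finSumFinEquiv.symm.trans (Equiv.sumComm (Fin 2) (Fin 2))

def Ψa : A ≃ₐ[ℂ] MvPolynomial (Fin 2) B :=
  (renameEquiv ℂ e24).trans (sumAlgEquiv ℂ (Fin 2) (Fin 2))

lemma Ψa_X (j : Fin 4) : Ψa (X j) = (sumAlgEquiv ℂ (Fin 2) (Fin 2)) (X (e24 j)) := by
  simp [Ψa]

lemma Ψa_X0 : Ψa (X 0) = C (X 0) := by
  rw [Ψa_X, show e24 0 = Sum.inr 0 by decide]
  exact sumAlgEquiv_X_inr (R := ℂ) (S₁ := Fin 2) (S₂ := Fin 2) (0 : Fin 2)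

lemma Ψa_X1 : Ψa (X 1) = C (X 1) := by
  rw [Ψa_X, show e24 1 = Sum.inr 1 by decide]
  exact sumAlgEquiv_X_inr (R := ℂ) (S₁ := Fin 2) (S₂ := Fin 2) (1 : Fin 2)

lemma Ψa_X2 : Ψa (X 2) = X 0 := by
  rw [Ψa_X, show e24 2 = Sum.inl 0 by decide]
  exact sumAlgEquiv_X_inl (R := ℂ) (S₁ := Fin 2) (S₂ := Fin 2) (0 : Fin 2)

lemma Ψa_X3 : Ψa (X 3) = X 1 := by
  rw [Ψa_X, show e24 3 = Sum.inl 1 by decide]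
  exact sumAlgEquiv_X_inl (R := ℂ) (S₁ := Fin 2) (S₂ := Fin 2) (1 : Fin 2)

lemma Ψa_incl (p : B) : Ψa (incl p) = C p := by
  have key : (Ψa.toAlgHom.toRingHom.comp incl) = (C : B →+* MvPolynomial (Fin 2) B) := by
    apply MvPolynomial.ringHom_ext
    · intro r
      simp only [RingHom.comp_apply]
      have h1 : incl (C r) = C r := by simp [incl]
      rw [h1]
      have h2 : (C r : A) = algebraMap ℂ A r := rfl
      simp only [AlgHom.toRingHom_eq_coe, RingHom.coe_coe, AlgEquiv.coe_algHom, h2]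
      rw [AlgEquiv.commutes]
      rfl
    · intro i
      simp only [RingHom.comp_apply, AlgHom.toRingHom_eq_coe, RingHom.coe_coe,
        AlgEquiv.coe_algHom]
      have h1 : incl (X i) = X (Fin.castLE (by norm_num) i) := by simp [incl]
      rw [h1]
      fin_cases i
      · exact Ψa_X0
      · exact Ψa_X1
  exact RingHom.congr_fun key p

lemma Ψa_vv (i : Fin 7) : Ψa (vv i) = monomial (νm i) (1 : B) := by
  rw [vv, μm, monomial_single_add, ← X_pow_eq_monomial, map_mul, map_pow, map_pow,
    Ψa_X2, Ψa_X3, νm, monomial_single_add, ← X_pow_eq_monomial]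

lemma νm_inj : Function.Injective νm := by
  intro i j h
  have h0 : cc i = cc j := by
    simpa [νm, Finsupp.single_apply] using DFunLike.congr_fun h (0 : Fin 2)
  have h1 : dd i = dd j := by
    simpa [νm, Finsupp.single_apply] using DFunLike.congr_fun h (1 : Fin 2)
  exact idx_inj (by simp [h0, h1] : (fun i => (cc i, dd i)) i = _)

def Ψlin : A ≃ₗ[B] MvPolynomial (Fin 2) B :=
  { Ψa.toEquiv with
    map_add' := fun a b => map_add Ψa a b
    map_smul' := fun p q => by
      simp only [Equiv.toFun_as_coe, AlgEquiv.toEquiv_eq_coe, EquivLike.coe_coe,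
        RingHom.id_apply]
      rw [smul_eq_incl_mul, map_mul, Ψa_incl, Algebra.smul_def]
      rfl }

lemma Ψlin_apply (q : A) : Ψlin q = Ψa q := rfl

/-! ### The span description of `Ã` -/

lemma monomial_mem_span {σ : Fin 4 →₀ ℕ} (h : 2 * σ 2 + 3 * σ 3 ≤ 6) (c : ℂ) :
    monomial σ c ∈ Submodule.span B (Set.range vv) := by
  obtain ⟨i, h2, h3⟩ := exists_idx h
  have hdec := sigma_decomp σ h2 h3
  have : monomial σ c = (monomial (Finsupp.single 0 (σ 0) + Finsupp.single 1 (σ 1)) c : B) • vv i := by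
    rw [smul_eq_incl_mul, vv, incl_monomial_mul, ← hdec]
  rw [this]
  exact Submodule.smul_mem _ _ (Submodule.subset_span ⟨i, rfl⟩)

lemma weightedTotalDegree_vv (n : ℕ) (i : Fin 7) :
    weightedTotalDegree (wt n) (vv i) ≤ 6 * n := by
  rw [vv, weightedTotalDegree]
  have hs : (monomial (μm i) (1:ℂ)).support = {μm i} := by
    rw [support_monomial]; simp
  rw [hs, Finset.sup_singleton, weight_eq, μm_0, μm_1, μm_2, μm_3]
  have := wle i
  nlinarith [Nat.zero_le n]

lemma support_le {n : ℕ} (hn : 1 ≤ n) {g : A} (hg : weightedTotalDegree (wt n) g ≤ 6 * n)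
    {σ : Fin 4 →₀ ℕ} (hσ : σ ∈ g.support) : 2 * σ 2 + 3 * σ 3 ≤ 6 := by
  have h1 : Finsupp.weight (wt n) σ ≤ 6 * n := le_trans (le_weightedTotalDegree (wt n) hσ) hg
  rw [weight_eq] at h1
  have h2 : n * (2 * σ 2 + 3 * σ 3) ≤ n * 6 := by nlinarith
  exact Nat.le_of_mul_le_mul_left h2 (by omega)

lemma At_eq_span {n : ℕ} (hn : 1 ≤ n) :
    Submodule.span B {g : A | weightedTotalDegree (wt n) g ≤ 6 * n}
      = Submodule.span B (Set.range vv) := by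
  apply le_antisymm
  · rw [Submodule.span_le]
    intro g hg
    rw [← support_sum_monomial_coeff g]
    exact Submodule.sum_mem _ fun σ hσ => monomial_mem_span (support_le hn hg hσ) _
  · rw [Submodule.span_le]
    rintro _ ⟨i, rfl⟩
    exact Submodule.subset_span (weightedTotalDegree_vv n i)

/-! ### Freeness and rank -/

lemma map_At_eq :
    (Submodule.span B (Set.range vv)).map (Ψlin : A →ₗ[B] MvPolynomial (Fin 2) B)
      = Submodule.span B (Set.range fun i : Fin 7 => (monomial (νm i) (1 : B))) := by
  have hcomp : (⇑(Ψlin : A →ₗ[B] MvPolynomial (Fin 2) B) ∘ vv) = fun i : Fin 7 => monomial (νm i) (1 : B) :=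
    funext fun i => Ψa_vv i
  rw [Submodule.map_span, ← Set.range_comp, hcomp]

lemma li_ν : LinearIndependent B (fun i : Fin 7 => (monomial (νm i) (1 : B))) := by
  have := (basisMonomials (Fin 2) B).linearIndependent.comp νm νm_inj
  simp only [coe_basisMonomials] at this; exact this

def bAt : Module.Basis (Fin 7) B ↥(Submodule.span B (Set.range vv)) :=
  (Module.Basis.span li_ν).map
    ((Ψlin.submoduleMap (Submodule.span B (Set.range vv))).trans
      (LinearEquiv.ofEq _ _ map_At_eq)).symm

/-! ### The supported description of `Ã` as a `ℂ`-submodule -/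

def S6 : Set (Fin 4 →₀ ℕ) := {σ | 2 * σ 2 + 3 * σ 3 ≤ 6}

lemma incl_support_zw {p : B} {α : Fin 4 →₀ ℕ} (hα : α ∈ (incl p).support) :
    α 2 = 0 ∧ α 3 = 0 := by
  classical
  have : (incl p).support = Finset.image (Finsupp.mapDomain (Fin.castLE (by norm_num : 2 ≤ 4)))
      p.support := support_rename_of_injective castLE_inj
  rw [this, Finset.mem_image] at hα
  obtain ⟨τ, -, rfl⟩ := hα
  exact ⟨emb_2 τ, emb_3 τ⟩

lemma smul_mem_supported {p : B} {q : A} (hq : q ∈ AddMonoidAlgebra.supported ℂ ℂ S6) :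
    p • q ∈ AddMonoidAlgebra.supported ℂ ℂ S6 := by
  classical
  rw [AddMonoidAlgebra.mem_supported] at hq ⊢
  intro σ hσ
  have hσ' : σ ∈ (incl p * q).support := by
    rw [← smul_eq_incl_mul]; exact Finset.mem_coe.mp hσ
  have := MvPolynomial.support_mul (incl p) q hσ'
  rw [Finset.mem_add] at this
  obtain ⟨α, hα, β, hβ, rfl⟩ := this
  have hzw := incl_support_zw hα
  have hβ' : (2 : ℕ) * β 2 + 3 * β 3 ≤ 6 := hq hβ
  show 2 * (α + β) 2 + 3 * (α + β) 3 ≤ 6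
  simp only [Finsupp.add_apply, hzw.1, hzw.2, zero_add]
  exact hβ'

lemma restrict_eq_supported :
    (Submodule.span B (Set.range vv)).restrictScalars ℂ = AddMonoidAlgebra.supported ℂ ℂ S6 := by
  apply le_antisymm
  · intro g hg
    rw [Submodule.restrictScalars_mem] at hg
    induction hg using Submodule.span_induction with
    | mem x hx =>
      obtain ⟨i, rfl⟩ := hx
      rw [AddMonoidAlgebra.mem_supported]
      intro σ hσ
      rw [Finset.mem_coe, vv] at hσ
      have hs : σ = μm i := by
        simpa using MvPolynomial.support_monomial_subset hσ
      subst hs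
      show 2 * μm i 2 + 3 * μm i 3 ≤ 6
      rw [μm_2, μm_3]
      exact wle i
    | zero => exact Submodule.zero_mem _
    | add x y _ _ hx hy => exact Submodule.add_mem _ hx hy
    | smul a x _ hx => exact smul_mem_supported hx
  · intro g hg
    rw [AddMonoidAlgebra.mem_supported] at hg
    rw [Submodule.restrictScalars_mem, ← support_sum_monomial_coeff g]
    refine Submodule.sum_mem _ fun σ hσ => monomial_mem_span ?_ _
    exact hg hσ

/-! ### Counting -/

def Tset (n m : ℕ) : Set (Fin 4 →₀ ℕ) := {d | Finsupp.weight (wt n) d = m}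

lemma supported_inf (s t : Set (Fin 4 →₀ ℕ)) :
    AddMonoidAlgebra.supported ℂ ℂ s ⊓ AddMonoidAlgebra.supported ℂ ℂ t = AddMonoidAlgebra.supported ℂ ℂ (s ∩ t) := by
  ext g
  simp [Submodule.mem_inf, AddMonoidAlgebra.mem_supported, Set.subset_inter_iff]

def W (n : ℕ) (i : Fin 7) : ℕ := cc i * (2 * n) + dd i * (3 * n)

lemma W_le (n : ℕ) (i : Fin 7) : W n i ≤ 6 * n := by
  have := wle i
  rw [W]
  nlinarith [Nat.zero_le n]

def τσ (a b : ℕ) (i : Fin 7) : Fin 4 →₀ ℕ :=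
  Finsupp.single 0 a + Finsupp.single 1 b + μm i

lemma τσ_0 (a b : ℕ) (i : Fin 7) : τσ a b i 0 = a := by
  rw [τσ]
  simp only [Finsupp.add_apply, μm_0, Finsupp.single_eq_same,
    Finsupp.single_eq_of_ne' (by decide : (1 : Fin 4) ≠ 0), zero_add, add_zero]
lemma τσ_1 (a b : ℕ) (i : Fin 7) : τσ a b i 1 = b := by
  rw [τσ]
  simp only [Finsupp.add_apply, μm_1, Finsupp.single_eq_same,
    Finsupp.single_eq_of_ne' (by decide : (0 : Fin 4) ≠ 1), zero_add, add_zero]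
lemma τσ_2 (a b : ℕ) (i : Fin 7) : τσ a b i 2 = cc i := by
  rw [τσ]
  simp only [Finsupp.add_apply, μm_2,
    Finsupp.single_eq_of_ne' (by decide : (0 : Fin 4) ≠ 2),
    Finsupp.single_eq_of_ne' (by decide : (1 : Fin 4) ≠ 2), zero_add, add_zero]
lemma τσ_3 (a b : ℕ) (i : Fin 7) : τσ a b i 3 = dd i := by
  rw [τσ]
  simp only [Finsupp.add_apply, μm_3,
    Finsupp.single_eq_of_ne' (by decide : (0 : Fin 4) ≠ 3),
    Finsupp.single_eq_of_ne' (by decide : (1 : Fin 4) ≠ 3), zero_add, add_zero]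

lemma W_eq (n : ℕ) (i : Fin 7) : cc i * (2 * n) + dd i * (3 * n) = W n i := rfl

def FF (n m : ℕ) (h6 : 6 * n ≤ m) : (Σ i : Fin 7, Fin (m + 1 - W n i)) → ↥(S6 ∩ Tset n m) :=
  fun x =>
    ⟨τσ (x.2 : ℕ) (m - W n x.1 - (x.2 : ℕ)) x.1, by
      have hW := W_le n x.1
      have ha : (x.2 : ℕ) < m + 1 - W n x.1 := x.2.2
      constructor
      · show 2 * _ + 3 * _ ≤ 6
        rw [τσ_2, τσ_3]
        exact wle x.1
      · show Finsupp.weight (wt n) _ = m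
        rw [weight_eq, τσ_0, τσ_1, τσ_2, τσ_3, add_assoc, W_eq]
        omega⟩

lemma FF_bij (n m : ℕ) (h6 : 6 * n ≤ m) : Function.Bijective (FF n m h6) := by
  constructor
  · rintro ⟨i, a⟩ ⟨j, b⟩ hab
    have h : τσ (a : ℕ) (m - W n i - (a : ℕ)) i = τσ (b : ℕ) (m - W n j - (b : ℕ)) j :=
      Subtype.ext_iff.mp hab
    have h2 : cc i = cc j := by
      have := DFunLike.congr_fun h (2 : Fin 4)
      rwa [τσ_2, τσ_2] at this
    have h3 : dd i = dd j := by
      have := DFunLike.congr_fun h (3 : Fin 4)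
      rwa [τσ_3, τσ_3] at this
    have hij : i = j := idx_inj (by simp [h2, h3] : (fun i => (cc i, dd i)) i = _)
    subst hij
    have h0 : (a : ℕ) = (b : ℕ) := by
      have := DFunLike.congr_fun h (0 : Fin 4)
      rwa [τσ_0, τσ_0] at this
    simp [Fin.ext_iff, h0]
  · rintro ⟨σ, hσ1, hσ2⟩
    obtain ⟨i, h2, h3⟩ := exists_idx hσ1
    have hw : Finsupp.weight (wt n) σ = m := hσ2
    rw [weight_eq] at hw
    have hWi : W n i = σ 2 * (2 * n) + σ 3 * (3 * n) := by rw [← W_eq, h2, h3]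
    rw [add_assoc, ← hWi] at hw
    have hWle := W_le n i
    have ha : σ 0 < m + 1 - W n i := by omega
    refine ⟨⟨i, ⟨σ 0, ha⟩⟩, ?_⟩
    apply Subtype.ext
    show τσ (σ 0) (m - W n i - σ 0) i = σ
    ext j
    fin_cases j
    · show τσ _ _ i 0 = σ 0
      rw [τσ_0]
    · show τσ _ _ i 1 = σ 1
      rw [τσ_1]
      omega
    · show τσ _ _ i 2 = σ 2
      rw [τσ_2, h2]
    · show τσ _ _ i 3 = σ 3
      rw [τσ_3, h3]

def EQ (n m : ℕ) (h6 : 6 * n ≤ m) : (Σ i : Fin 7, Fin (m + 1 - W n i)) ≃ ↥(S6 ∩ Tset n m) :=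
  Equiv.ofBijective _ (FF_bij n m h6)

lemma finrank_supported (u : Set (Fin 4 →₀ ℕ)) [Fintype ↥u] :
    Module.finrank ℂ ↥((AddMonoidAlgebra.supported ℂ ℂ u : Submodule ℂ A)) = Fintype.card ↥u := by
  have e : ↥(AddMonoidAlgebra.supported ℂ ℂ u) ≃ₗ[ℂ] (↥u → ℂ) :=
    (AddMonoidAlgebra.supportedEquivFinsupp u).trans (Finsupp.linearEquivFunOnFinite ℂ ℂ ↥u)
  rw [e.finrank_eq, Module.finrank_fintype_fun_eq_card]


/-! ### Main theorem -/

lemma Tset_def (n m : ℕ) : {d : Fin 4 →₀ ℕ | Finsupp.weight (wt n) d = m} = Tset n m := rfl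

lemma hom_eq_supported (n m : ℕ) (hn : 1 ≤ n) (h : 6 * n ≤ m) :
    weightedHomogeneousSubmodule ℂ (wt n) (6 * n) =
      AddMonoidAlgebra.supported ℂ ℂ (S6 ∩ Tset n (6 * n)) := by
  rw [weightedHomogeneousSubmodule_eq_finsupp_supported]
  congr 1
  ext σ
  simp only [Set.mem_inter_iff, Set.mem_setOf_eq, Tset, S6]
  constructor
  · intro h
    refine ⟨?_, h⟩
    rw [weight_eq] at h
    have h2 : n * (2 * σ 2 + 3 * σ 3) ≤ n * 6 := by nlinarith
    exact Nat.le_of_mul_le_mul_left h2 (by omega)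
  · exact fun h => h.2

/-- **The `B`-module `Ã` is free of rank `7`.**
Let `A = ℂ[x,y,z,w]` be graded with weights `(1,1,2n,3n)` and let `Ã` be the
`ℂ[x,y]`-submodule of `A` generated by the elements of weighted degree at most `6n`.
Then `Ã` is a free `ℂ[x,y]`-module of rank `7`, and for all `k ≥ 0`
`dim_ℂ Ã₍₆ₙ₊ₖ₎ = dim_ℂ A₍₆ₙ₎ + 7k`, where `Ã₍d₎` (resp. `A₍d₎`) denotes the
subspace of weighted-homogeneous elements of degree `d` of `Ã` (resp. `A`). -/
theorem stmt9 (n : ℕ) (hn : 1 ≤ n)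
    (At : Submodule B A)
    (hAt : At = Submodule.span B {g : A | weightedTotalDegree (wt n) g ≤ 6 * n}) :
    Module.Free B ↥At ∧ Module.rank B ↥At = 7 ∧
      ∀ k : ℕ,
        Module.finrank ℂ
            ↥(At.restrictScalars ℂ ⊓ weightedHomogeneousSubmodule ℂ (wt n) (6 * n + k))
          = Module.finrank ℂ ↥(weightedHomogeneousSubmodule ℂ (wt n) (6 * n)) + 7 * k := by
  subst hAt
  rw [At_eq_span hn]
  refine ⟨Module.Free.of_basis bAt, ?_, ?_⟩
  · rw [rank_eq_card_basis bAt]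
    simp
  · intro k
    have h6k : 6 * n ≤ 6 * n + k := Nat.le_add_right _ _
    have h60 : 6 * n ≤ 6 * n := le_rfl
    letI F1 : Fintype ↥(S6 ∩ Tset n (6 * n + k)) := Fintype.ofEquiv _ (EQ n (6 * n + k) h6k)
    letI F2 : Fintype ↥(S6 ∩ Tset n (6 * n)) := Fintype.ofEquiv _ (EQ n (6 * n) h60)
    have hL : (Submodule.span B (Set.range vv)).restrictScalars ℂ ⊓
        weightedHomogeneousSubmodule ℂ (wt n) (6 * n + k)
        = AddMonoidAlgebra.supported ℂ ℂ (S6 ∩ Tset n (6 * n + k)) := by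
      rw [restrict_eq_supported, weightedHomogeneousSubmodule_eq_finsupp_supported,
        supported_inf, Tset_def]
    rw [hL, hom_eq_supported n (6 * n) hn h60]
    have e1 := finrank_supported (S6 ∩ Tset n (6 * n + k))
    have e2 := finrank_supported (S6 ∩ Tset n (6 * n))
    have c1 : Fintype.card ↥(S6 ∩ Tset n (6 * n + k))
        = ∑ i : Fin 7, (6 * n + k + 1 - W n i) := by
      rw [← Fintype.card_congr (EQ n (6 * n + k) h6k)]
      simp [Fintype.card_sigma]
    have c2 : Fintype.card ↥(S6 ∩ Tset n (6 * n))
        = ∑ i : Fin 7, (6 * n + 1 - W n i) := by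
      rw [← Fintype.card_congr (EQ n (6 * n) h60)]
      simp [Fintype.card_sigma]
    have final : Fintype.card ↥(S6 ∩ Tset n (6 * n + k))
        = Fintype.card ↥(S6 ∩ Tset n (6 * n)) + 7 * k := by
      rw [c1, c2]
      calc ∑ i : Fin 7, (6 * n + k + 1 - W n i)
          = ∑ i : Fin 7, ((6 * n + 1 - W n i) + k) :=
            Finset.sum_congr rfl fun i _ => by have := W_le n i; omega
        _ = (∑ i : Fin 7, (6 * n + 1 - W n i)) + 7 * k := by
            rw [Finset.sum_add_distrib, Finset.sum_const, Finset.card_univ, Fintype.card_fin,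
              smul_eq_mul]
    exact e1.trans (final.trans (congrArg (· + 7 * k) e2.symm))

end
end
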